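/- Let π be the spike-and-slab prior on ℝ^T: a binary vector γ with exactly S nonzero entries is drawn uniformly from all such vectors, and conditionally θ_t = 0 if γ_t = 0 and θ_t ∼ Uniform([−C_B, C_B]) if γ_t = 1. Let θ* have support of size at most S with |θ*_t| + s_n ≤ C_B on its support, and let q_n* be the distribution with γ*_t = 1{θ*_t ≠ 0} and θ_t ∼ Uniform([θ*_t − s_n, θ*_t + s_n]) on the support, θ_t = 0 otherwise. Then KL(q_n*, π) ≤ S log(T C_B) + (S/2) log(1/s_n²). -/

import Mathlib

open MeasureTheory Finset
open scoped Classical ENNReal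

/-- Uniform probability measure on the interval `[a, b]`. -/
noncomputable def unifIcc (a b : ℝ) : Measure ℝ :=
  (ENNReal.ofReal (b - a))⁻¹ • (volume.restrict (Set.Icc a b))

namespace SpikeSlabAux

lemma isFiniteMeasure_smul {α : Type*} [MeasurableSpace α] (c : ℝ≥0∞) (hc : c ≠ ∞)
    (μ : Measure α) [IsFiniteMeasure μ] : IsFiniteMeasure (c • μ) := by
  constructor
  rw [Measure.smul_apply, smul_eq_mul]
  exact ENNReal.mul_lt_top hc.lt_top (measure_lt_top μ _)

lemma smul_measure_mono {α : Type*} [MeasurableSpace α] {c : ℝ≥0∞} {μ ν : Measure α}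
    (h : μ ≤ ν) : c • μ ≤ c • ν := by
  refine Measure.le_iff.2 fun s hs => ?_
  simp only [Measure.smul_apply, smul_eq_mul]
  exact mul_le_mul_right (h s) c

lemma prod_mono {α β : Type*} [MeasurableSpace α] [MeasurableSpace β]
    {μ₁ μ₂ : Measure α} {ν₁ ν₂ : Measure β} [SFinite ν₁] [SFinite ν₂]
    (h1 : μ₁ ≤ μ₂) (h2 : ν₁ ≤ ν₂) : μ₁.prod ν₁ ≤ μ₂.prod ν₂ := by
  refine Measure.le_iff.2 fun s hs => ?_
  rw [Measure.prod_apply hs, Measure.prod_apply hs]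
  calc ∫⁻ x, ν₁ (Prod.mk x ⁻¹' s) ∂μ₁ ≤ ∫⁻ x, ν₂ (Prod.mk x ⁻¹' s) ∂μ₁ :=
        lintegral_mono fun x => h2 _
    _ ≤ ∫⁻ x, ν₂ (Prod.mk x ⁻¹' s) ∂μ₂ := lintegral_mono' h1 le_rfl

lemma pi_mono : ∀ (n : ℕ) (μ ν : Fin n → Measure ℝ),
    (∀ i, IsFiniteMeasure (μ i)) → (∀ i, IsFiniteMeasure (ν i)) →
    (∀ i, μ i ≤ ν i) → Measure.pi μ ≤ Measure.pi ν := by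
  intro n
  induction n with
  | zero =>
    intro μ ν _ _ _
    rw [Measure.pi_of_empty, Measure.pi_of_empty]
  | succ n ih =>
    intro μ ν hμ hν h
    haveI := hμ; haveI := hν
    set e := MeasurableEquiv.piFinSuccAbove (fun _ : Fin (n+1) => ℝ) 0 with he
    have hμe := (measurePreserving_piFinSuccAbove μ 0).map_eq
    have hνe := (measurePreserving_piFinSuccAbove ν 0).map_eq
    have key : (Measure.pi μ).map e ≤ (Measure.pi ν).map e := by
      rw [hμe, hνe]
      exact prod_mono (h 0) (ih _ _ (fun j => hμ _) (fun j => hν _) (fun j => h _))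
    calc Measure.pi μ = ((Measure.pi μ).map e).map e.symm :=
          (MeasurableEquiv.map_symm_map e).symm
      _ ≤ ((Measure.pi ν).map e).map e.symm := Measure.map_mono key e.symm.measurable
      _ = Measure.pi ν := MeasurableEquiv.map_symm_map e

lemma pi_smul (n : ℕ) (c : Fin n → ℝ≥0∞) (P : Fin n → Measure ℝ)
    [∀ i, IsFiniteMeasure (P i)] (hc : ∀ i, c i ≠ ∞) :
    Measure.pi (fun i => c i • P i) = (∏ i, c i) • Measure.pi P := by
  have key : ∀ s : Fin n → Set ℝ, (∀ i, MeasurableSet (s i)) →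
      ((∏ i, c i) • Measure.pi P) (Set.pi Set.univ s) = ∏ i, (c i • P i) (s i) := by
    intro s hs
    rw [Measure.smul_apply, Measure.pi_pi, smul_eq_mul]
    simp only [Measure.smul_apply, smul_eq_mul]
    rw [Finset.prod_mul_distrib]
  haveI hsig2 : ∀ i, SigmaFinite (c i • P i) := fun i =>
    @IsFiniteMeasure.toSigmaFinite _ _ _ (isFiniteMeasure_smul (c i) (hc i) (P i))
  exact Measure.pi_eq key

lemma unifIcc_univ {a b : ℝ} (h : a < b) : unifIcc a b Set.univ = 1 := by
  rw [unifIcc, Measure.smul_apply, Measure.restrict_apply MeasurableSet.univ,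
    Set.univ_inter, Real.volume_Icc, smul_eq_mul]
  exact ENNReal.inv_mul_cancel (by simpa using h) ENNReal.ofReal_ne_top

lemma unifIcc_prob {a b : ℝ} (h : a < b) : IsProbabilityMeasure (unifIcc a b) :=
  ⟨unifIcc_univ h⟩

lemma unifIcc_le {a b A B : ℝ} (hab : a < b) (hAB : A < B) (hA : A ≤ a) (hB : b ≤ B) :
    unifIcc a b ≤ (ENNReal.ofReal (B - A) * (ENNReal.ofReal (b - a))⁻¹) • unifIcc A B := by
  have hBA : ENNReal.ofReal (B - A) ≠ 0 := by
    simp [ENNReal.ofReal_eq_zero]; linarith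
  have h1 : (ENNReal.ofReal (B - A) * (ENNReal.ofReal (b - a))⁻¹) • unifIcc A B
      = (ENNReal.ofReal (b - a))⁻¹ • (volume.restrict (Set.Icc A B)) := by
    rw [unifIcc, smul_smul]
    congr 1
    rw [mul_comm, ← mul_assoc, ENNReal.inv_mul_cancel hBA ENNReal.ofReal_ne_top, one_mul]
  rw [h1, unifIcc]
  refine Measure.le_iff.2 fun s hs => ?_
  simp only [Measure.smul_apply, smul_eq_mul]
  exact mul_le_mul_right
    (Measure.restrict_mono (Set.Icc_subset_Icc hA hB) le_rfl s) _

end SpikeSlabAux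

open SpikeSlabAux

set_option maxHeartbeats 1000000

/-- KL bound for the spike-and-slab prior: with `π` the spike-and-slab prior on `ℝ^T`
(uniform choice of a size-`S` support, uniform `[−C_B, C_B]` slabs) and `q_n*` the
product of uniforms `U([θ*_t − s_n, θ*_t + s_n])` on the support of `θ*` and point
masses at `0` elsewhere, one has `KL(q_n*, π) ≤ S log(T C_B) + (S/2) log(1/s_n²)`. -/
theorem spike_slab_kl_bound
    (T S : ℕ) (hS : 1 ≤ S) (hST : S ≤ T)
    (C_B : ℝ) (hCB : 2 ≤ C_B) (s_n : ℝ) (hs : 0 < s_n)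
    (θstar : Fin T → ℝ)
    (hsupp : (Finset.univ.filter (fun t => θstar t ≠ 0)).card = S)
    (hbdd : ∀ t, θstar t ≠ 0 → |θstar t| + s_n ≤ C_B)
    (π q : Measure (Fin T → ℝ))
    (hπ : π = ((Finset.univ.filter
          (fun γ : Fin T → Bool => (Finset.univ.filter (fun t => γ t = true)).card = S)).card
            : ℝ≥0∞)⁻¹
        • ∑ γ ∈ Finset.univ.filter
            (fun γ : Fin T → Bool => (Finset.univ.filter (fun t => γ t = true)).card = S),
          Measure.pi (fun t => if γ t then unifIcc (-C_B) C_B else Measure.dirac 0))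
    (hq : q = Measure.pi (fun t =>
        if θstar t = 0 then Measure.dirac 0
        else unifIcc (θstar t - s_n) (θstar t + s_n))) :
    ∫ θ, Real.log ((q.rnDeriv π θ).toReal) ∂q
      ≤ S * Real.log (T * C_B) + (S / 2) * Real.log (1 / s_n ^ 2) := by
  classical
  have hCB0 : (0:ℝ) < C_B := by linarith
  -- a support point exists, so s_n ≤ C_B
  obtain ⟨t0, ht0⟩ : ∃ t, θstar t ≠ 0 := by
    have hne : (Finset.univ.filter (fun t => θstar t ≠ 0)).Nonempty := by
      rw [← Finset.card_pos, hsupp]; omega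
    obtain ⟨t, ht⟩ := hne
    exact ⟨t, (Finset.mem_filter.1 ht).2⟩
  have hsCB : s_n ≤ C_B := by
    have h1 := hbdd t0 ht0
    have h2 := abs_nonneg (θstar t0)
    linarith
  -- the support indicator
  set γstar : Fin T → Bool := fun t => if θstar t = 0 then false else true with hγdef
  set F := Finset.univ.filter
      (fun γ : Fin T → Bool => (Finset.univ.filter (fun t => γ t = true)).card = S) with hF
  have hγmem : γstar ∈ F := by
    rw [hF, Finset.mem_filter]
    refine ⟨Finset.mem_univ _, ?_⟩
    rw [← hsupp]
    congr 1
    apply Finset.filter_congr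
    intro t _
    by_cases h : θstar t = 0 <;> simp [hγdef, h]
  set N := F.card with hN
  have hN1 : 1 ≤ N := Finset.card_pos.2 ⟨γstar, hγmem⟩
  have hNT : N ≤ T ^ S := by
    have hle : N ≤ (Finset.powersetCard S (Finset.univ : Finset (Fin T))).card := by
      apply Finset.card_le_card_of_injOn
        (fun γ => Finset.univ.filter (fun t => γ t = true))
      · intro γ hγ
        rw [Finset.mem_coe, Finset.mem_powersetCard]
        exact ⟨Finset.filter_subset _ _, (Finset.mem_filter.1 (Finset.mem_coe.1 hγ)).2⟩
      · intro γ1 _ γ2 _ hfe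
        funext t
        have := Finset.ext_iff.1 hfe t
        simp only [Finset.mem_filter, Finset.mem_univ, true_and] at this
        cases h1 : γ1 t <;> cases h2 : γ2 t <;> simp_all
    rw [Finset.card_powersetCard, Finset.card_univ, Fintype.card_fin] at hle
    exact hle.trans (Nat.choose_le_pow T S)
  -- component measures
  set Pc : Fin T → Measure ℝ :=
    fun t => if γstar t then unifIcc (-C_B) C_B else Measure.dirac 0 with hPc
  set qc : Fin T → Measure ℝ :=
    fun t => if θstar t = 0 then Measure.dirac 0
      else unifIcc (θstar t - s_n) (θstar t + s_n) with hqc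
  have hPc_prob : ∀ t, IsProbabilityMeasure (Pc t) := by
    intro t
    rw [hPc]
    dsimp only
    split_ifs
    · exact unifIcc_prob (by linarith)
    · infer_instance
  have hqc_prob : ∀ t, IsProbabilityMeasure (qc t) := by
    intro t
    rw [hqc]
    dsimp only
    split_ifs
    · infer_instance
    · exact unifIcc_prob (by linarith)
  haveI := hPc_prob
  haveI := hqc_prob
  have hq' : q = Measure.pi qc := hq
  -- the constant k
  set k : ℝ≥0∞ := ENNReal.ofReal (2*C_B) * (ENNReal.ofReal (2*s_n))⁻¹ with hk
  have h2s0 : ENNReal.ofReal (2*s_n) ≠ 0 := by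
    simp [ENNReal.ofReal_eq_zero]; linarith
  have h2CB0 : ENNReal.ofReal (2*C_B) ≠ 0 := by
    simp [ENNReal.ofReal_eq_zero]; linarith
  have hk_ne_top : k ≠ ∞ := by
    rw [hk]
    exact ENNReal.mul_ne_top ENNReal.ofReal_ne_top (ENNReal.inv_ne_top.2 h2s0)
  have hk_ne_zero : k ≠ 0 := by
    rw [hk]
    exact mul_ne_zero h2CB0 (ENNReal.inv_ne_zero.2 ENNReal.ofReal_ne_top)
  -- componentwise domination
  have hcomp : ∀ t, qc t ≤ (if θstar t = 0 then 1 else k) • Pc t := by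
    intro t
    by_cases h : θstar t = 0
    · simp [hqc, hPc, hγdef, h]
    · have habs := hbdd t h
      have habs' := abs_le.1 (by linarith : |θstar t| ≤ C_B - s_n)
      have hA : -C_B ≤ θstar t - s_n := by linarith [habs'.1]
      have hB : θstar t + s_n ≤ C_B := by linarith [habs'.2]
      have hle := unifIcc_le (a := θstar t - s_n) (b := θstar t + s_n)
        (A := -C_B) (B := C_B) (by linarith) (by linarith) hA hB
      have e1 : C_B - (-C_B) = 2*C_B := by ring
      have e2 : (θstar t + s_n) - (θstar t - s_n) = 2*s_n := by ring
      rw [e1, e2] at hle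
      simp only [hqc, hPc, hγdef, h, if_neg h, if_pos]
      simpa [hk] using hle
  -- product bound : q ≤ k^S • P
  set P := Measure.pi Pc with hP
  have hprod_le : Measure.pi qc ≤ Measure.pi (fun t => (if θstar t = 0 then 1 else k) • Pc t) :=
    pi_mono T qc _ (fun t => inferInstance)
      (fun t => isFiniteMeasure_smul _ (by split_ifs; exacts [ENNReal.one_ne_top, hk_ne_top]) _)
      hcomp
  rw [pi_smul T _ Pc (fun t => by split_ifs; exacts [ENNReal.one_ne_top, hk_ne_top])] at hprod_le
  have hprodk : (∏ t, (if θstar t = 0 then 1 else k)) = k ^ S := by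
    rw [Finset.prod_ite, Finset.prod_const, Finset.prod_const, one_pow, one_mul, ← hsupp]
  rw [hprodk] at hprod_le
  -- P ≤ N • π
  have hN0' : (N : ℝ≥0∞) ≠ 0 := Nat.cast_ne_zero.2 (by omega)
  have hNtop : (N : ℝ≥0∞) ≠ ∞ := ENNReal.natCast_ne_top N
  have hPπ : P ≤ (N : ℝ≥0∞) • π := by
    rw [hπ, smul_smul, ENNReal.mul_inv_cancel hN0' hNtop, one_smul, hP, hPc]
    refine Measure.le_iff.2 fun s hs => ?_
    rw [Measure.finset_sum_apply]
    exact Finset.single_le_sum (f := fun γ : Fin T → Bool =>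
        (Measure.pi (fun t => if γ t then unifIcc (-C_B) C_B else Measure.dirac 0)) s)
      (fun γ _ => zero_le) hγmem
  -- combine
  set c : ℝ≥0∞ := k ^ S * (N : ℝ≥0∞) with hc
  have hc0 : c ≠ 0 := mul_ne_zero (pow_ne_zero _ hk_ne_zero) hN0'
  have hctop : c ≠ ∞ := ENNReal.mul_ne_top (ENNReal.pow_ne_top hk_ne_top) hNtop
  have hqle : q ≤ c • π := by
    rw [hq']
    calc Measure.pi qc ≤ k ^ S • P := hprod_le
      _ ≤ k ^ S • ((N : ℝ≥0∞) • π) := smul_measure_mono hPπ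
      _ = c • π := by rw [smul_smul, hc]
  -- measure instances
  haveI hqprob : IsProbabilityMeasure q := by
    rw [hq']; infer_instance
  haveI hπfin : IsFiniteMeasure π := by
    constructor
    rw [hπ, Measure.smul_apply, Measure.finset_sum_apply]
    have hone : ∀ γ ∈ F,
        Measure.pi (fun t => if γ t then unifIcc (-C_B) C_B else Measure.dirac 0)
          Set.univ = 1 := by
      intro γ _
      haveI : ∀ t, IsProbabilityMeasure
          ((fun t => if γ t then unifIcc (-C_B) C_B else Measure.dirac 0) t) := by
        intro t
        dsimp only
        split_ifs
        · exact unifIcc_prob (by linarith)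
        · infer_instance
      exact measure_univ
    rw [Finset.sum_congr rfl hone]
    simp only [Finset.sum_const, nsmul_eq_mul, mul_one, smul_eq_mul]
    exact ENNReal.mul_lt_top (ENNReal.inv_ne_top.2 hN0').lt_top hNtop.lt_top
  -- rnDeriv bound
  haveI hcsmul_fin : IsFiniteMeasure (c • π) := isFiniteMeasure_smul c hctop π
  have h1 : q.rnDeriv (c • π) ≤ᵐ[c • π] 1 := Measure.rnDeriv_le_one_of_le hqle
  have h1' : q.rnDeriv (c • π) ≤ᵐ[π] 1 :=
    h1.filter_mono (Measure.absolutelyContinuous_smul hc0).ae_le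
  have h2 : q.rnDeriv (c • π) =ᵐ[π] c⁻¹ • q.rnDeriv π :=
    Measure.rnDeriv_smul_right_of_ne_top' q π hc0 hctop
  have h3 : q.rnDeriv π ≤ᵐ[π] fun _ => c := by
    filter_upwards [h1', h2] with x hx1 hx2
    rw [hx2] at hx1
    simp only [Pi.smul_apply, smul_eq_mul, Pi.one_apply] at hx1
    calc q.rnDeriv π x = c * (c⁻¹ * q.rnDeriv π x) := by
          rw [← mul_assoc, ENNReal.mul_inv_cancel hc0 hctop, one_mul]
      _ ≤ c * 1 := mul_le_mul_right hx1 c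
      _ = c := mul_one c
  have hqπ : q ≪ π := Measure.absolutelyContinuous_of_le_smul hqle
  have h4 : q.rnDeriv π ≤ᵐ[q] fun _ => c := h3.filter_mono hqπ.ae_le
  -- the real constant
  set cR : ℝ := (C_B / s_n) ^ S * N with hcR
  have hcR_eq : c.toReal = cR := by
    rw [hc, ENNReal.toReal_mul, ENNReal.toReal_pow, hk, ENNReal.toReal_mul,
      ENNReal.toReal_inv, ENNReal.toReal_ofReal (by linarith), ENNReal.toReal_ofReal
      (by linarith), ENNReal.toReal_natCast, hcR]
    have hbase : 2 * C_B * (2 * s_n)⁻¹ = C_B / s_n := by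
      field_simp
    rw [hbase]
  have hCBs1 : (1:ℝ) ≤ C_B / s_n := (one_le_div hs).2 hsCB
  have h1cR : (1:ℝ) ≤ cR := by
    rw [hcR]
    have h1 : (1:ℝ) ≤ (C_B / s_n) ^ S := one_le_pow₀ hCBs1
    have h2 : (1:ℝ) ≤ (N:ℝ) := by exact_mod_cast hN1
    nlinarith
  have h5 : ∀ᵐ θ ∂q, Real.log ((q.rnDeriv π θ).toReal) ≤ Real.log cR := by
    filter_upwards [h4] with θ hθ
    have hx : (q.rnDeriv π θ).toReal ≤ cR := by
      rw [← hcR_eq]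
      exact ENNReal.toReal_mono hctop hθ
    rcases eq_or_lt_of_le (ENNReal.toReal_nonneg : 0 ≤ (q.rnDeriv π θ).toReal) with h0 | h0
    · rw [← h0, Real.log_zero]
      exact Real.log_nonneg h1cR
    · exact Real.log_le_log h0 hx
  -- final arithmetic
  have hT1 : (1:ℝ) ≤ (T:ℝ) := by exact_mod_cast le_trans hS hST
  have hfinal : Real.log cR ≤ S * Real.log (T * C_B) + (S / 2) * Real.log (1 / s_n ^ 2) := by
    have hN_real : (N:ℝ) ≤ (T:ℝ) ^ S := by exact_mod_cast hNT
    have hNpos : (0:ℝ) < N := by exact_mod_cast hN1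
    have hlogN : Real.log N ≤ S * Real.log T := by
      calc Real.log N ≤ Real.log ((T:ℝ) ^ S) := Real.log_le_log hNpos hN_real
        _ = S * Real.log T := Real.log_pow _ _
    have hlogcR : Real.log cR = S * (Real.log C_B - Real.log s_n) + Real.log N := by
      rw [hcR, Real.log_mul (by positivity) (by positivity), Real.log_pow,
        Real.log_div (by positivity) (by positivity)]
    have hlogTC : Real.log ((T:ℝ) * C_B) = Real.log T + Real.log C_B :=
      Real.log_mul (by positivity) (by positivity)
    have hlogs : Real.log (1 / s_n ^ 2) = -(2 * Real.log s_n) := by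
      rw [one_div, Real.log_inv, Real.log_pow]
      norm_num
    rw [hlogcR, hlogTC, hlogs]
    have hScast : (0:ℝ) ≤ (S:ℝ) := Nat.cast_nonneg S
    nlinarith [hlogN]
  -- conclude
  by_cases hint : Integrable (fun θ => Real.log ((q.rnDeriv π θ).toReal)) q
  · calc ∫ θ, Real.log ((q.rnDeriv π θ).toReal) ∂q
        ≤ ∫ _, Real.log cR ∂q := integral_mono_ae hint (integrable_const _) h5
      _ = Real.log cR := by
          rw [integral_const, probReal_univ, one_smul]
      _ ≤ _ := hfinal
  · rw [integral_undef hint]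
    exact le_trans (Real.log_nonneg h1cR) hfinal
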